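/- Let 1/2 < κ < 5/2 and b > 0, h = π/n with n ≥ 4, and suppose |u''(θ)| ≤ b θ^{κ−2} for θ ∈ (0, π/2]. Then for the piecewise linear interpolant u_h, Σ_{j=1}^{n/2−1} ∫_{θ_j}^{θ_{j+1}} (θ(π−θ))^{−2} |u(θ) − u_h(θ)|² dθ ≤ (b²/(8π²)) (1 + 1/(5−2κ)) h^{2κ−1}. -/

import Mathlib

open MeasureTheory Real Set


private lemma taylor2 {E : Type*} [NormedAddCommGroup E] [NormedSpace ℝ E]
    (v v' v'' : ℝ → E) (c M : ℝ) (hc : 0 ≤ c)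
    (hd1 : ∀ x ∈ Icc (0:ℝ) c, HasDerivAt v (v' x) x)
    (hd2 : ∀ x ∈ Icc (0:ℝ) c, HasDerivAt v' (v'' x) x)
    (hM : ∀ x ∈ Icc (0:ℝ) c, ‖v'' x‖ ≤ M) :
    ‖v c - v 0 - c • v' 0‖ ≤ M * c ^ 2 / 2 := by
  have hlip : ∀ x ∈ Icc (0:ℝ) c, ‖v' x - v' 0‖ ≤ M * x := by
    intro x hx
    have := (convex_Icc (0:ℝ) c).norm_image_sub_le_of_norm_hasDerivWithin_le
      (f := v') (f' := v'') (fun y hy => (hd2 y hy).hasDerivWithinAt) hM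
      (left_mem_Icc.2 hc) hx
    simpa [abs_of_nonneg hx.1] using this
  set g : ℝ → E := fun x => v x - v 0 - x • v' 0 with hg
  have hg' : ∀ x ∈ Icc (0:ℝ) c, HasDerivAt g (v' x - v' 0) x := by
    intro x hx
    have h1 : HasDerivAt (fun x : ℝ => x • v' 0) ((1:ℝ) • v' 0) x :=
      (hasDerivAt_id x).smul_const (v' 0)
    have := ((hd1 x hx).sub_const (v 0)).sub (h1)
    rw [one_smul] at this
    exact this
  have hB : ∀ x : ℝ, HasDerivAt (fun x : ℝ => M * x ^ 2 / 2) (M * x) x := by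
    intro x
    have : HasDerivAt (fun x : ℝ => M * x ^ 2 / 2) (M * (↑2 * x ^ 1) / 2) x :=
      ((hasDerivAt_pow 2 x).const_mul M).div_const 2
    convert this using 1
    push_cast
    ring
  have key : ∀ ⦃x : ℝ⦄, x ∈ Icc (0:ℝ) c → ‖g x‖ ≤ M * x ^ 2 / 2 :=
    image_norm_le_of_norm_deriv_right_le_deriv_boundary
      (f := g) (f' := fun x => v' x - v' 0) (B := fun x => M * x ^ 2 / 2)
      (B' := fun x => M * x)
      (fun x hx => ((hg' x hx).continuousAt).continuousWithinAt)
      (fun x hx => (hg' x (Ico_subset_Icc_self hx)).hasDerivWithinAt)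
      (by simp [hg]) hB
      (fun x hx => hlip x (Ico_subset_Icc_self hx))
  have := key (right_mem_Icc.2 hc)
  simpa [hg] using this


private lemma interp_bound {E : Type*} [NormedAddCommGroup E] [NormedSpace ℝ E]
    (u u' u'' : ℝ → E) (a b M : ℝ) (hab : a < b) (hM : 0 ≤ M)
    (hd1 : ∀ θ ∈ Icc a b, HasDerivAt u (u' θ) θ)
    (hd2 : ∀ θ ∈ Icc a b, HasDerivAt u' (u'' θ) θ)
    (hbd : ∀ θ ∈ Icc a b, ‖u'' θ‖ ≤ M)
    (θ : ℝ) (hθ : θ ∈ Icc a b) :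
    ‖u θ - (u a + ((θ - a) / (b - a)) • (u b - u a))‖ ≤ M * (b - a) ^ 2 / 8 := by
  obtain ⟨hθ1, hθ2⟩ := hθ
  have hba : (0:ℝ) < b - a := by linarith
  set t : ℝ := (θ - a) / (b - a) with ht
  have ht0 : 0 ≤ t := div_nonneg (by linarith) hba.le
  have ht1 : t ≤ 1 := (div_le_one hba).2 (by linarith)
  have htm : t * (b - a) = θ - a := div_mul_cancel₀ _ hba.ne'
  -- Ra
  have hRa : ‖u a - u θ + (θ - a) • u' θ‖ ≤ M * (θ - a) ^ 2 / 2 := by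
    have hmem : ∀ x ∈ Icc (0:ℝ) (θ - a), θ - x ∈ Icc a b := by
      intro x hx; constructor <;> [linarith [hx.2]; linarith [hx.1]]
    have d1 : ∀ x ∈ Icc (0:ℝ) (θ - a),
        HasDerivAt (fun y => u (θ - y)) ((-1 : ℝ) • u' (θ - x)) x := by
      intro x hx
      exact HasDerivAt.scomp x (hd1 _ (hmem x hx)) ((hasDerivAt_id x).const_sub θ)
    have d2 : ∀ x ∈ Icc (0:ℝ) (θ - a),
        HasDerivAt (fun y => (-1 : ℝ) • u' (θ - y)) (u'' (θ - x)) x := by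
      intro x hx
      have := HasDerivAt.scomp x (hd2 _ (hmem x hx)) ((hasDerivAt_id x).const_sub θ)
      exact (this.const_smul (-1 : ℝ)).congr_deriv (by simp)
    have := taylor2 (fun y => u (θ - y)) (fun y => (-1 : ℝ) • u' (θ - y))
      (fun y => u'' (θ - y)) (θ - a) M (by linarith) d1 d2
      (fun x hx => hbd _ (hmem x hx))
    simpa [smul_smul] using this
  -- Rb
  have hRb : ‖u b - u θ - (b - θ) • u' θ‖ ≤ M * (b - θ) ^ 2 / 2 := by
    have hmem : ∀ x ∈ Icc (0:ℝ) (b - θ), θ + x ∈ Icc a b := by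
      intro x hx; constructor <;> [linarith [hx.1]; linarith [hx.2]]
    have d1 : ∀ x ∈ Icc (0:ℝ) (b - θ),
        HasDerivAt (fun y => u (θ + y)) ((1 : ℝ) • u' (θ + x)) x := by
      intro x hx
      exact HasDerivAt.scomp x (hd1 _ (hmem x hx)) ((hasDerivAt_id x).const_add θ)
    have d2 : ∀ x ∈ Icc (0:ℝ) (b - θ),
        HasDerivAt (fun y => (1 : ℝ) • u' (θ + y)) (u'' (θ + x)) x := by
      intro x hx
      have := HasDerivAt.scomp x (hd2 _ (hmem x hx)) ((hasDerivAt_id x).const_add θ)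
      exact (this.const_smul (1 : ℝ)).congr_deriv (by simp)
    have := taylor2 (fun y => u (θ + y)) (fun y => (1 : ℝ) • u' (θ + y))
      (fun y => u'' (θ + y)) (b - θ) M (by linarith) d1 d2
      (fun x hx => hbd _ (hmem x hx))
    simpa using this
  -- identity
  have key : u θ - (u a + t • (u b - u a)) =
      -((1 - t) • (u a - u θ + (θ - a) • u' θ) + t • (u b - u θ - (b - θ) • u' θ)) := by
    have h1 : (1 - t) * (θ - a) - t * (b - θ) = 0 := by
      have : t * (b - a) = θ - a := htm
      nlinarith [this]
    have hθeq : θ = a + t * (b - a) := by linarith [htm]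
    clear_value t
    clear ht htm h1 hθ1 hθ2 ht0 ht1
    subst hθeq
    match_scalars <;> ring
  rw [key]
  have hb1 : ‖(1 - t) • (u a - u θ + (θ - a) • u' θ) + t • (u b - u θ - (b - θ) • u' θ)‖
      ≤ (1 - t) * (M * (θ - a) ^ 2 / 2) + t * (M * (b - θ) ^ 2 / 2) := by
    calc _ ≤ ‖(1 - t) • (u a - u θ + (θ - a) • u' θ)‖ + ‖t • (u b - u θ - (b - θ) • u' θ)‖ :=
          norm_add_le _ _
      _ = (1 - t) * ‖u a - u θ + (θ - a) • u' θ‖ + t * ‖u b - u θ - (b - θ) • u' θ‖ := by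
          rw [norm_smul, norm_smul, Real.norm_eq_abs, Real.norm_eq_abs,
            abs_of_nonneg ht0, abs_of_nonneg (by linarith : (0:ℝ) ≤ 1 - t)]
      _ ≤ (1 - t) * (M * (θ - a) ^ 2 / 2) + t * (M * (b - θ) ^ 2 / 2) :=
          add_le_add (mul_le_mul_of_nonneg_left hRa (by linarith))
            (mul_le_mul_of_nonneg_left hRb ht0)
  rw [norm_neg]
  refine hb1.trans ?_
  have hθa : θ - a = t * (b - a) := htm.symm
  have hbθ : b - θ = (1 - t) * (b - a) := by nlinarith [htm]
  rw [hθa, hbθ]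
  nlinarith [mul_nonneg (mul_nonneg hM (sq_nonneg (b - a))) (sq_nonneg (2 * t - 1))]


private lemma rpow_telescope {q : ℝ} (hq : q < 0) {m : ℕ} (hm : 2 ≤ m) :
    -q * (m : ℝ) ^ (q - 1) ≤ ((m : ℝ) - 1) ^ q - (m : ℝ) ^ q := by
  have hm1 : (1:ℝ) ≤ (m : ℝ) - 1 := by
    have : (2:ℝ) ≤ (m : ℝ) := by exact_mod_cast hm
    linarith
  have hlt : (m : ℝ) - 1 < (m : ℝ) := by linarith
  have hcont : ContinuousOn (fun x : ℝ => x ^ q) (Icc ((m:ℝ) - 1) m) := by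
    intro x hx
    exact (Real.continuousAt_rpow_const x q (Or.inl (by linarith [hx.1]))).continuousWithinAt
  have hderiv : ∀ x ∈ Ioo ((m:ℝ) - 1) (m:ℝ),
      HasDerivAt (fun x : ℝ => x ^ q) (q * x ^ (q - 1)) x := by
    intro x hx
    exact Real.hasDerivAt_rpow_const (Or.inl (by nlinarith [hx.1] : x ≠ 0))
  obtain ⟨c, hc, hceq⟩ := exists_hasDerivAt_eq_slope (fun x : ℝ => x ^ q)
    (fun x => q * x ^ (q - 1)) hlt hcont hderiv
  have hc0 : (1:ℝ) ≤ c := by linarith [hc.1]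
  have hpow : (m : ℝ) ^ (q - 1) ≤ c ^ (q - 1) :=
    Real.rpow_le_rpow_of_nonpos (by linarith) hc.2.le (by linarith)
  have hslope : (m : ℝ) ^ q - ((m:ℝ) - 1) ^ q = q * c ^ (q - 1) := by
    rw [hceq]; field_simp; ring
  nlinarith [hpow, hslope]

private lemma sum_rpow_le {p : ℝ} (hp : p < -1) (N : ℕ) :
    ∑ j ∈ Finset.Icc 1 N, (j : ℝ) ^ p ≤ 1 + 1 / (-p - 1) := by
  set q : ℝ := p + 1 with hqdef
  have hq : q < 0 := by simp [hqdef]; linarith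
  have hrec : ∀ N : ℕ, 1 ≤ N →
      ∑ j ∈ Finset.Icc 1 N, (j : ℝ) ^ p + (N : ℝ) ^ q / (-q) ≤ 1 + 1 / (-q) := by
    intro N hN
    induction N, hN using Nat.le_induction with
    | base => simp [Real.one_rpow]
    | succ N hN ih =>
      rw [Finset.sum_Icc_succ_top (by omega : 1 ≤ N + 1)]
      have hkey : -q * ((N:ℝ) + 1) ^ (q - 1) ≤ (N : ℝ) ^ q - ((N:ℝ) + 1) ^ q := by
        have := rpow_telescope hq (by omega : 2 ≤ N + 1)
        push_cast at this
        convert this using 2 <;> push_cast <;> ring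
      have hqpos : 0 < -q := by linarith
      have hp' : ((N:ℕ) + 1 : ℝ) ^ p = ((N:ℝ) + 1) ^ (q - 1) := by
        push_cast; congr 1; rw [hqdef]; ring
      push_cast
      rw [hp']
      have heq : ((N:ℝ) ^ q - ((N:ℝ) + 1) ^ q - -q * ((N:ℝ) + 1) ^ (q - 1)) / (-q)
          = (N:ℝ) ^ q / (-q) - ((N:ℝ) + 1) ^ q / (-q) - ((N:ℝ) + 1) ^ (q - 1) := by
        have hq0 : q ≠ 0 := ne_of_lt hq
        field_simp
        try ring
      have hnn : 0 ≤ ((N:ℝ) ^ q - ((N:ℝ) + 1) ^ q - -q * ((N:ℝ) + 1) ^ (q - 1)) / (-q) :=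
        div_nonneg (by linarith) hqpos.le
      rw [heq] at hnn
      linarith [ih]
  rcases Nat.eq_zero_or_pos N with hN | hN
  · subst hN
    simp only [Finset.Icc_eq_empty_of_lt (by omega : (0:ℕ) < 1), Finset.sum_empty]
    have : (0:ℝ) < -p - 1 := by linarith
    positivity
  · have := hrec N hN
    have hpos : 0 < (N : ℝ) ^ q / (-q) := by
      apply div_pos (Real.rpow_pos_of_pos (by exact_mod_cast hN) q) (by linarith)
    have hq' : -q = -p - 1 := by simp [hqdef]; ring
    rw [hq'] at this hpos
    linarith

set_option maxHeartbeats 2000000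

/-- for `1/2 < κ < 5/2`, `b > 0`, `h = π/n` with `n ≥ 4`, a twice
differentiable `u` with `|u''(θ)| ≤ b θ^{κ-2}` on `(0, π/2]`, and `u_h` its piecewise linear
interpolant, the middle-interval contribution satisfies
`Σ_{j=1}^{n/2-1} ∫_{θ_j}^{θ_{j+1}} (θ(π-θ))^{-2} |u - u_h|² dθ
  ≤ (b²/(8π²)) (1 + 1/(5-2κ)) h^{2κ-1}`. -/
theorem middle_intervals_estimate (κ b : ℝ) (hκ1 : 1/2 < κ) (hκ2 : κ < 5/2) (hb : 0 < b)
    (n : ℕ) (hn : 4 ≤ n) (h : ℝ) (hh : h = π / n)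
    (u u' u'' uh : ℝ → EuclideanSpace ℂ (Fin 2))
    (hd1 : ∀ θ ∈ Ioo (0:ℝ) π, HasDerivAt u (u' θ) θ)
    (hd2 : ∀ θ ∈ Ioo (0:ℝ) π, HasDerivAt u' (u'' θ) θ)
    (hbound : ∀ θ ∈ Ioc (0:ℝ) (π/2), ‖u'' θ‖ ≤ b * θ ^ (κ - 2))
    (hnodes : ∀ j : ℕ, j ≤ n → uh ((j : ℝ) * h) = u ((j : ℝ) * h))
    (haffine : ∀ j : ℕ, j < n → ∀ θ ∈ Icc ((j:ℝ) * h) (((j:ℝ) + 1) * h),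
      uh θ = u ((j:ℝ) * h) + ((θ - (j:ℝ) * h) / h) • (u (((j:ℝ) + 1) * h) - u ((j:ℝ) * h))) :
    ∑ j ∈ Finset.Icc 1 (n / 2 - 1),
        ∫ θ in Ioo ((j:ℝ) * h) (((j:ℝ) + 1) * h), ‖u θ - uh θ‖ ^ 2 / (θ * (π - θ)) ^ 2
      ≤ (b ^ 2 / (8 * π ^ 2)) * (1 + 1 / (5 - 2 * κ)) * h ^ (2 * κ - 1) := by
  have hπ : (0:ℝ) < π := pi_pos
  have hn0 : (0:ℝ) < (n:ℝ) := by
    have : 0 < n := by omega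
    exact_mod_cast this
  have hh0 : (0:ℝ) < h := by rw [hh]; positivity
  have hnh : (n:ℝ) * h = π := by rw [hh]; field_simp
  set c : ℝ := b ^ 2 / (8 * π ^ 2) * h ^ (2 * κ - 1) with hc
  have hc0 : 0 ≤ c := by positivity
  have key : ∀ j ∈ Finset.Icc 1 (n / 2 - 1),
      (∫ θ in Ioo ((j:ℝ) * h) (((j:ℝ) + 1) * h), ‖u θ - uh θ‖ ^ 2 / (θ * (π - θ)) ^ 2)
        ≤ c * (j : ℝ) ^ (2 * κ - 6) := by
    intro j hj
    obtain ⟨hj1, hj2⟩ := Finset.mem_Icc.1 hj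
    have hjn : j < n := by omega
    have hj1R : (1:ℝ) ≤ (j:ℝ) := by exact_mod_cast hj1
    have hj0 : (0:ℝ) < (j:ℝ) := by linarith
    have hjhalf : 2 * ((j:ℝ) + 1) ≤ (n:ℝ) := by
      have : 2 * (j + 1) ≤ n := by omega
      exact_mod_cast this
    set A := (j:ℝ) * h with hA
    set B := ((j:ℝ) + 1) * h with hB
    have hA0 : 0 < A := mul_pos hj0 hh0
    have hABs : B - A = h := by rw [hA, hB]; ring
    have hAB : A < B := by linarith
    have hB0 : 0 < B := lt_trans hA0 hAB
    have hBle : B ≤ π / 2 := by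
      calc B ≤ (n:ℝ) * h / 2 := by rw [hB]; nlinarith
        _ = π / 2 := by rw [hnh]
    have hsub : Icc A B ⊆ Ioo 0 π := fun θ hθ =>
      ⟨lt_of_lt_of_le hA0 hθ.1, lt_of_le_of_lt (hθ.2.trans hBle) (by linarith)⟩
    have hsub2 : Icc A B ⊆ Ioc 0 (π/2) := fun θ hθ =>
      ⟨lt_of_lt_of_le hA0 hθ.1, hθ.2.trans hBle⟩
    set M := b * max (A ^ (κ-2)) (B ^ (κ-2)) with hM
    have hmax0 : 0 < max (A ^ (κ-2)) (B ^ (κ-2)) :=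
      lt_of_lt_of_le (Real.rpow_pos_of_pos hA0 _) (le_max_left _ _)
    have hM0 : 0 ≤ M := mul_nonneg hb.le hmax0.le
    have hMbd : ∀ θ ∈ Icc A B, ‖u'' θ‖ ≤ M := by
      intro θ hθ
      refine (hbound θ (hsub2 hθ)).trans ?_
      rw [hM]
      apply mul_le_mul_of_nonneg_left _ hb.le
      rcases le_or_gt (κ - 2) 0 with hk | hk
      · exact le_trans (Real.rpow_le_rpow_of_nonpos hA0 hθ.1 hk) (le_max_left _ _)
      · exact le_trans (Real.rpow_le_rpow (le_trans hA0.le hθ.1) hθ.2 hk.le) (le_max_right _ _)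
    have hint : ∀ θ ∈ Icc A B, ‖u θ - uh θ‖ ≤ M * h ^ 2 / 8 := by
      intro θ hθ
      have heq := haffine j hjn θ hθ
      rw [← hA, ← hB] at heq
      rw [heq, ← hABs]
      have := interp_bound u u' u'' A B M hAB hM0
        (fun θ hθ => hd1 θ (hsub hθ)) (fun θ hθ => hd2 θ (hsub hθ)) hMbd θ hθ
      exact this
    set K := (M * h ^ 2 / 8) ^ 2 / (A * (π / 2)) ^ 2 with hK
    have hptK : ∀ θ ∈ Ioo A B, ‖u θ - uh θ‖ ^ 2 / (θ * (π - θ)) ^ 2 ≤ K := by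
      intro θ hθ
      have hθI : θ ∈ Icc A B := Ioo_subset_Icc_self hθ
      have h1 : ‖u θ - uh θ‖ ^ 2 ≤ (M * h ^ 2 / 8) ^ 2 :=
        pow_le_pow_left₀ (norm_nonneg _) (hint θ hθI) 2
      have hπθ : π / 2 ≤ π - θ := by linarith [hθI.2.trans hBle]
      have hmul : A * (π / 2) ≤ θ * (π - θ) :=
        mul_le_mul hθI.1 hπθ (by positivity) (le_trans hA0.le hθI.1)
      have h2 : (A * (π / 2)) ^ 2 ≤ (θ * (π - θ)) ^ 2 :=
        pow_le_pow_left₀ (by positivity) hmul 2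
      exact div_le_div₀ (by positivity) h1 (by positivity) h2
    have hucont : ContinuousOn (fun θ => ‖u θ - uh θ‖ ^ 2 / (θ * (π - θ)) ^ 2) (Icc A B) := by
      have h1 : ContinuousOn u (Icc A B) := fun θ hθ =>
        ((hd1 θ (hsub hθ)).continuousAt).continuousWithinAt
      have h2 : ContinuousOn uh (Icc A B) := by
        have hg : ContinuousOn (fun θ => u A + ((θ - A) / h) • (u B - u A)) (Icc A B) := by
          fun_prop
        refine hg.congr fun θ hθ => ?_
        have heq := haffine j hjn θ hθ
        rw [← hA, ← hB] at heq
        exact heq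
      apply ContinuousOn.div (((h1.sub h2).norm).pow 2) (by fun_prop)
      intro θ hθ
      have hm := hsub hθ
      have hpos : 0 < θ * (π - θ) := mul_pos hm.1 (by linarith [hm.2])
      positivity
    have hIntOn : IntegrableOn (fun θ => ‖u θ - uh θ‖ ^ 2 / (θ * (π - θ)) ^ 2) (Ioo A B) :=
      (hucont.integrableOn_Icc).mono_set Ioo_subset_Icc_self
    have hIK : (∫ θ in Ioo A B, ‖u θ - uh θ‖ ^ 2 / (θ * (π - θ)) ^ 2)
        ≤ ∫ _ in Ioo A B, K := by
      exact setIntegral_mono_on hIntOn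
        (integrableOn_const measure_Ioo_lt_top.ne) measurableSet_Ioo hptK
    have hIKval : (∫ _ in Ioo A B, K) = K * h := by
      rw [setIntegral_const, measureReal_def, Real.volume_Ioo,
        ENNReal.toReal_ofReal (by linarith : (0:ℝ) ≤ B - A), smul_eq_mul, hABs, mul_comm]
    have hfin : K * h ≤ c * (j:ℝ) ^ (2*κ - 6) := by
      have e1 : (A ^ (κ-2)) ^ 2 = A ^ (2*κ-4) := by
        rw [sq, ← Real.rpow_add hA0]; congr 1; ring
      have e2 : (B ^ (κ-2)) ^ 2 = B ^ (2*κ-4) := by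
        rw [sq, ← Real.rpow_add hB0]; congr 1; ring
      have e3 : B ^ (2*κ-4) ≤ 2 * A ^ (2*κ-4) := by
        have hBA : B / A ≤ 2 := by
          rw [hA, hB, div_le_iff₀ hA0]
          have : ((j:ℝ) + 1) ≤ 2 * (j:ℝ) := by linarith
          nlinarith
        have h1le : (1:ℝ) ≤ B / A := (one_le_div hA0).2 hAB.le
        have hle1 : (B / A) ^ (2*κ-4) ≤ (B / A) ^ (1:ℝ) :=
          Real.rpow_le_rpow_of_exponent_le h1le (by linarith)
        rw [Real.rpow_one] at hle1
        have hfin2 : (B / A) ^ (2*κ-4) ≤ 2 := hle1.trans hBA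
        rw [Real.div_rpow hB0.le hA0.le] at hfin2
        rw [div_le_iff₀ (Real.rpow_pos_of_pos hA0 _)] at hfin2
        linarith [hfin2]
      have hM2 : M ^ 2 ≤ 2 * b ^ 2 * A ^ (2*κ-4) := by
        rw [hM, mul_pow]
        have hmx : (max (A ^ (κ-2)) (B ^ (κ-2))) ^ 2 ≤ 2 * A ^ (2*κ-4) := by
          rcases max_cases (A ^ (κ-2)) (B ^ (κ-2)) with ⟨hmm, _⟩ | ⟨hmm, _⟩ <;> rw [hmm]
          · rw [e1]; linarith [Real.rpow_pos_of_pos hA0 (2*κ-4)]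
          · rw [e2]; exact e3
        calc b^2 * (max (A ^ (κ-2)) (B ^ (κ-2))) ^ 2 ≤ b^2 * (2 * A^(2*κ-4)) :=
              mul_le_mul_of_nonneg_left hmx (by positivity)
          _ = 2*b^2*A^(2*κ-4) := by ring
      have e4 : A ^ (2*κ-4) * h ^ 5 = (j:ℝ) ^ (2*κ-6) * h ^ (2*κ-1) * A ^ 2 := by
        have q1 : A ^ (2*κ-4) = A ^ (2*κ-6) * A ^ (2:ℕ) := by
          rw [← Real.rpow_natCast A 2, ← Real.rpow_add hA0]; congr 1; push_cast; ring
        have q2 : A ^ (2*κ-6) = (j:ℝ) ^ (2*κ-6) * h ^ (2*κ-6) := by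
          rw [hA, Real.mul_rpow hj0.le hh0.le]
        have q3 : h ^ (2*κ-6) * h ^ (5:ℕ) = h ^ (2*κ-1) := by
          rw [← Real.rpow_natCast h 5, ← Real.rpow_add hh0]; congr 1; push_cast; ring
        calc A ^ (2*κ-4) * h ^ 5
            = (j:ℝ)^(2*κ-6) * (h^(2*κ-6) * h^(5:ℕ)) * A^(2:ℕ) := by rw [q1, q2]; ring
          _ = (j:ℝ)^(2*κ-6) * h^(2*κ-1) * A^2 := by rw [q3]
      have hKval : K * h = M ^ 2 * h ^ 5 / (16 * π ^ 2 * A ^ 2) := by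
        rw [hK]; field_simp; ring
      rw [hKval, hc]
      rw [div_le_iff₀ (by positivity : (0:ℝ) < 16 * π^2 * A^2)]
      calc M^2 * h^5 ≤ 2*b^2*A^(2*κ-4) * h^5 :=
            mul_le_mul_of_nonneg_right hM2 (by positivity)
        _ = 2*b^2*((j:ℝ)^(2*κ-6) * h^(2*κ-1) * A^2) := by rw [mul_assoc, e4]
        _ = b^2/(8*π^2) * h^(2*κ-1) * (j:ℝ)^(2*κ-6) * (16*π^2*A^2) := by
            field_simp; ring
    exact le_trans (hIK.trans (le_of_eq hIKval)) hfin
  calc ∑ j ∈ Finset.Icc 1 (n / 2 - 1),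
        ∫ θ in Ioo ((j:ℝ) * h) (((j:ℝ) + 1) * h), ‖u θ - uh θ‖ ^ 2 / (θ * (π - θ)) ^ 2
      ≤ ∑ j ∈ Finset.Icc 1 (n / 2 - 1), c * (j:ℝ) ^ (2*κ - 6) := Finset.sum_le_sum key
    _ = c * ∑ j ∈ Finset.Icc 1 (n / 2 - 1), (j:ℝ) ^ (2*κ - 6) := by rw [Finset.mul_sum]
    _ ≤ c * (1 + 1/(5-2*κ)) := by
        have hs := sum_rpow_le (p := 2*κ-6) (by linarith) (n/2-1)
        have he : -(2*κ-6) - 1 = 5 - 2*κ := by ring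
        rw [he] at hs
        exact mul_le_mul_of_nonneg_left hs hc0
    _ = (b ^ 2 / (8 * π ^ 2)) * (1 + 1 / (5 - 2 * κ)) * h ^ (2 * κ - 1) := by rw [hc]; ring
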